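/- Non-symmetry of implication in C: for distinct propositional variables p and q, the sequent ⇒ (p → q) → (q → p) is not derivable in G3C. -/
import Mathlib


/-- Formulas of the connexive logic C: propositional variables, strong
negation `∼`, conjunction, disjunction and implication. -/
inductive Formula : Type
  | var : Nat → Formula
  | snot : Formula → Formula
  | and : Formula → Formula → Formula
  | or : Formula → Formula → Formula
  | imp : Formula → Formula → Formula
deriving DecidableEq
/-- Derivability of sequents `Γ ⇒ A` (with `Γ` a finite multiset of formulas)
in the sequent calculus `G3C` for the connexive logic `C`. -/
inductive Gder : Multiset Formula → Formula → Prop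
  | ax {Γ n} : Gder (.var n ::ₘ Γ) (.var n)
  | axSnot {Γ n} : Gder (.snot (.var n) ::ₘ Γ) (.snot (.var n))
  | andR {Γ A B} : Gder Γ A → Gder Γ B → Gder Γ (.and A B)
  | andL {Γ A B C} : Gder (A ::ₘ B ::ₘ Γ) C → Gder (.and A B ::ₘ Γ) C
  | orR₁ {Γ A B} : Gder Γ A → Gder Γ (.or A B)
  | orR₂ {Γ A B} : Gder Γ B → Gder Γ (.or A B)
  | orL {Γ A B C} : Gder (A ::ₘ Γ) C → Gder (B ::ₘ Γ) C → Gder (.or A B ::ₘ Γ) C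
  | impR {Γ A B} : Gder (A ::ₘ Γ) B → Gder Γ (.imp A B)
  | impL {Γ A B C} : Gder (.imp A B ::ₘ Γ) A → Gder (B ::ₘ Γ) C → Gder (.imp A B ::ₘ Γ) C
  | snotSnotR {Γ A} : Gder Γ A → Gder Γ (.snot (.snot A))
  | snotSnotL {Γ A C} : Gder (A ::ₘ Γ) C → Gder (.snot (.snot A) ::ₘ Γ) C
  | snotAndR₁ {Γ A B} : Gder Γ (.snot A) → Gder Γ (.snot (.and A B))
  | snotAndR₂ {Γ A B} : Gder Γ (.snot B) → Gder Γ (.snot (.and A B))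
  | snotAndL {Γ A B C} : Gder (.snot A ::ₘ Γ) C → Gder (.snot B ::ₘ Γ) C →
      Gder (.snot (.and A B) ::ₘ Γ) C
  | snotOrR {Γ A B} : Gder Γ (.snot A) → Gder Γ (.snot B) → Gder Γ (.snot (.or A B))
  | snotOrL {Γ A B C} : Gder (.snot A ::ₘ .snot B ::ₘ Γ) C → Gder (.snot (.or A B) ::ₘ Γ) C
  | snotImpR {Γ A B} : Gder (A ::ₘ Γ) (.snot B) → Gder Γ (.snot (.imp A B))
  | snotImpL {Γ A B C} : Gder (.snot (.imp A B) ::ₘ Γ) A → Gder (.snot B ::ₘ Γ) C →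
      Gder (.snot (.imp A B) ::ₘ Γ) C
/-- Positive/negative boolean evaluation of formulas. -/
def ev (v w : Nat → Bool) : Formula → Bool × Bool
  | .var n => (v n, w n)
  | .snot A => ((ev v w A).2, (ev v w A).1)
  | .and A B => ((ev v w A).1 && (ev v w B).1, (ev v w A).2 || (ev v w B).2)
  | .or A B => ((ev v w A).1 || (ev v w B).1, (ev v w A).2 && (ev v w B).2)
  | .imp A B => (!(ev v w A).1 || (ev v w B).1, !(ev v w A).1 || (ev v w B).2)

theorem sound (v w : Nat → Bool) {Γ C} (h : Gder Γ C)
    (hΓ : ∀ F ∈ Γ, (ev v w F).1 = true) : (ev v w C).1 = true := by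
  induction h with
  | ax => exact hΓ _ (Multiset.mem_cons_self _ _)
  | axSnot => exact hΓ _ (Multiset.mem_cons_self _ _)
  | andR _ _ ih1 ih2 => simp [ev, ih1 hΓ, ih2 hΓ]
  | andL _ ih =>
      apply ih
      intro F hF
      rcases Multiset.mem_cons.1 hF with rfl | hF
      · have := hΓ _ (Multiset.mem_cons_self _ _); simp [ev] at this; simp [this.1]
      rcases Multiset.mem_cons.1 hF with rfl | hF
      · have := hΓ _ (Multiset.mem_cons_self _ _); simp [ev] at this; simp [this.2]
      · exact hΓ _ (Multiset.mem_cons_of_mem hF)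
  | orR₁ _ ih => simp [ev, ih hΓ]
  | orR₂ _ ih => simp [ev, ih hΓ]
  | orL _ _ ih1 ih2 =>
      have := hΓ _ (Multiset.mem_cons_self _ _)
      simp [ev] at this
      rcases this with h1 | h1
      · apply ih1; intro F hF
        rcases Multiset.mem_cons.1 hF with rfl | hF
        · exact h1
        · exact hΓ _ (Multiset.mem_cons_of_mem hF)
      · apply ih2; intro F hF
        rcases Multiset.mem_cons.1 hF with rfl | hF
        · exact h1
        · exact hΓ _ (Multiset.mem_cons_of_mem hF)
  | impR _ ih =>
      rename_i Γ' A B _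
      simp only [ev]
      by_cases hA : (ev v w A).1 = true
      · rw [ih ?_]
        · simp
        · intro F hF
          rcases Multiset.mem_cons.1 hF with rfl | hF
          · exact hA
          · exact hΓ _ hF
      · simp at hA; simp [hA]
  | impL _ _ ih1 ih2 =>
      rename_i Γ' A B C' _ _
      have himp := hΓ _ (Multiset.mem_cons_self _ _)
      simp only [ev, Bool.or_eq_true, Bool.not_eq_true'] at himp
      have hA := ih1 hΓ
      have hB : (ev v w B).1 = true := by
        rcases himp with h' | h'
        · rw [hA] at h'; exact absurd h' (by simp)
        · exact h'
      apply ih2; intro F hF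
      rcases Multiset.mem_cons.1 hF with rfl | hF
      · exact hB
      · exact hΓ _ (Multiset.mem_cons_of_mem hF)
  | snotSnotR _ ih => simpa [ev] using ih hΓ
  | snotSnotL _ ih =>
      apply ih; intro F hF
      rcases Multiset.mem_cons.1 hF with rfl | hF
      · have := hΓ _ (Multiset.mem_cons_self _ _); simpa [ev] using this
      · exact hΓ _ (Multiset.mem_cons_of_mem hF)
  | snotAndR₁ _ ih => have := ih hΓ; simp [ev] at this ⊢; simp [this]
  | snotAndR₂ _ ih => have := ih hΓ; simp [ev] at this ⊢; simp [this]
  | snotAndL _ _ ih1 ih2 =>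
      have := hΓ _ (Multiset.mem_cons_self _ _)
      simp [ev] at this
      rcases this with h1 | h1
      · apply ih1; intro F hF
        rcases Multiset.mem_cons.1 hF with rfl | hF
        · simpa [ev] using h1
        · exact hΓ _ (Multiset.mem_cons_of_mem hF)
      · apply ih2; intro F hF
        rcases Multiset.mem_cons.1 hF with rfl | hF
        · simpa [ev] using h1
        · exact hΓ _ (Multiset.mem_cons_of_mem hF)
  | snotOrR _ _ ih1 ih2 =>
      have h1 := ih1 hΓ; have h2 := ih2 hΓ
      simp [ev] at h1 h2 ⊢; simp [h1, h2]
  | snotOrL _ ih =>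
      have := hΓ _ (Multiset.mem_cons_self _ _)
      simp [ev] at this
      apply ih; intro F hF
      rcases Multiset.mem_cons.1 hF with rfl | hF
      · simp [ev, this.1]
      rcases Multiset.mem_cons.1 hF with rfl | hF
      · simp [ev, this.2]
      · exact hΓ _ (Multiset.mem_cons_of_mem hF)
  | snotImpR _ ih =>
      rename_i Γ' A B _
      simp only [ev]
      by_cases hA : (ev v w A).1 = true
      · have := ih ?_
        · simp [ev] at this; simp [this]
        · intro F hF
          rcases Multiset.mem_cons.1 hF with rfl | hF
          · exact hA
          · exact hΓ _ hF
      · simp at hA; simp [hA]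
  | snotImpL _ _ ih1 ih2 =>
      rename_i Γ' A B C' _ _
      have himp := hΓ _ (Multiset.mem_cons_self _ _)
      simp only [ev, Bool.or_eq_true, Bool.not_eq_true'] at himp
      have hA := ih1 hΓ
      have hB : (ev v w B).2 = true := by
        rcases himp with h' | h'
        · rw [hA] at h'; exact absurd h' (by simp)
        · exact h'
      apply ih2; intro F hF
      rcases Multiset.mem_cons.1 hF with rfl | hF
      · simpa [ev] using hB
      · exact hΓ _ (Multiset.mem_cons_of_mem hF)

/-- Non-symmetry of implication in `C`: for distinct propositional variables
`p` and `q`, the sequent `⇒ (p → q) → (q → p)` is not derivable in `G3C`. -/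
theorem C_nonsymmetry_of_implication (p q : Nat) (hpq : p ≠ q) :
    ¬ Gder 0 (.imp (.imp (.var p) (.var q)) (.imp (.var q) (.var p))) := by
  intro h
  have := sound (fun n => n == q) (fun _ => false) h (by simp)
  simp [ev, hpq] at this
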